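/- Let α : [0,1) → [0,1) be the inverse of φ(x) = x + (1−x)·ln(1−x). Then (1−α(y))/(1−√y)² → +∞ as y → 1⁻. -/

import Mathlib

open Real Filter Set

-- t * (log t)^2 → 0 as t → 0+
lemma aux_sq_15 : Tendsto (fun t : ℝ => (Real.log t)^2 * t) (nhdsWithin 0 (Set.Ioi 0)) (nhds 0) := by
  have h1 : Tendsto (fun u : ℝ => Real.log u * u) (nhdsWithin 0 (Set.Ioi 0)) (nhds 0) := by
    have := tendsto_log_mul_rpow_nhdsGT_zero (r := 1) one_pos
    simpa using this
  have hsq : Tendsto Real.sqrt (nhdsWithin 0 (Set.Ioi 0)) (nhdsWithin 0 (Set.Ioi 0)) := by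
    apply tendsto_nhdsWithin_of_tendsto_nhds_of_eventually_within
    · have h : Tendsto Real.sqrt (nhds 0) (nhds 0) := by
        simpa using (Real.continuous_sqrt.tendsto 0)
      exact h.mono_left nhdsWithin_le_nhds
    · filter_upwards [self_mem_nhdsWithin] with t ht
      exact Real.sqrt_pos.2 ht
  have h2 : Tendsto (fun t : ℝ => (2 * (Real.log (Real.sqrt t) * Real.sqrt t))^2)
      (nhdsWithin 0 (Set.Ioi 0)) (nhds 0) := by
    have := ((h1.comp hsq).const_mul 2).pow 2
    simpa using this
  refine h2.congr' ?_
  filter_upwards [self_mem_nhdsWithin] with t ht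
  have ht' : (0:ℝ) ≤ t := le_of_lt ht
  rw [Real.log_sqrt ht', mul_pow, mul_pow, Real.sq_sqrt ht']
  ring

theorem stmt_15 (φ α : ℝ → ℝ) (hφ : ∀ x, φ x = x + (1 - x) * Real.log (1 - x))
    (hα : ∀ y ∈ Set.Ico (0:ℝ) 1, α y ∈ Set.Ico (0:ℝ) 1 ∧ φ (α y) = y) :
    Filter.Tendsto (fun y => (1 - α y) / (1 - Real.sqrt y) ^ 2)
      (nhdsWithin 1 (Set.Iio 1)) Filter.atTop := by
  set L := nhdsWithin (1:ℝ) (Set.Iio 1) with hL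
  have hmem : ∀ᶠ y in L, y ∈ Set.Ico (0:ℝ) 1 := by
    have h1 : ∀ᶠ y in L, (0:ℝ) < y := by
      apply eventually_nhdsWithin_of_eventually_nhds
      exact eventually_gt_nhds one_pos
    filter_upwards [h1, self_mem_nhdsWithin] with y hy hy' using ⟨le_of_lt hy, hy'⟩
  have key : ∀ y ∈ Set.Ico (0:ℝ) 1, 0 < 1 - α y ∧ 1 - α y ≤ 1 - y ∧
      1 - y = (1 - α y) * (1 - Real.log (1 - α y)) := by
    intro y hy
    obtain ⟨⟨hx0, hx1⟩, hφx⟩ := hα y hy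
    rw [hφ] at hφx
    have ht : 0 < 1 - α y := by linarith
    have hlog : Real.log (1 - α y) ≤ 0 := Real.log_nonpos (le_of_lt ht) (by linarith)
    refine ⟨ht, ?_, by nlinarith⟩
    nlinarith [mul_nonneg (le_of_lt ht) (neg_nonneg.2 hlog)]
  have hτ : Tendsto (fun y => 1 - α y) L (nhdsWithin 0 (Set.Ioi 0)) := by
    apply tendsto_nhdsWithin_of_tendsto_nhds_of_eventually_within
    · have hup : Tendsto (fun y : ℝ => 1 - y) L (nhds 0) := by
        have h : Tendsto (fun y : ℝ => 1 - y) (nhds 1) (nhds 0) := by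
          simpa using (continuous_sub_left (1:ℝ)).tendsto 1
        exact h.mono_left nhdsWithin_le_nhds
      apply tendsto_of_tendsto_of_tendsto_of_le_of_le' tendsto_const_nhds hup
      · filter_upwards [hmem] with y hy using le_of_lt (key y hy).1
      · filter_upwards [hmem] with y hy using (key y hy).2.1
    · filter_upwards [hmem] with y hy using (key y hy).1
  have hg : Tendsto (fun t : ℝ => (t * (1 - Real.log t)^2)⁻¹) (nhdsWithin 0 (Set.Ioi 0))
      Filter.atTop := by
    apply Filter.Tendsto.inv_tendsto_nhdsGT_zero
    apply tendsto_nhdsWithin_of_tendsto_nhds_of_eventually_within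
    · have h : Tendsto (fun t : ℝ => t - 2 * (Real.log t * t) + (Real.log t)^2 * t)
          (nhdsWithin 0 (Set.Ioi 0)) (nhds 0) := by
        have h0 : Tendsto (fun t : ℝ => t) (nhdsWithin 0 (Set.Ioi 0)) (nhds 0) :=
          tendsto_id.mono_left nhdsWithin_le_nhds
        have h1 : Tendsto (fun u : ℝ => Real.log u * u) (nhdsWithin 0 (Set.Ioi 0)) (nhds 0) := by
          have := tendsto_log_mul_rpow_nhdsGT_zero (r := 1) one_pos
          simpa using this
        have := (h0.sub (h1.const_mul 2)).add aux_sq_15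
        simpa using this
      refine h.congr ?_
      intro t; ring
    · have hIoo : Set.Ioo (0:ℝ) 1 ∈ nhdsWithin (0:ℝ) (Set.Ioi 0) :=
        Ioo_mem_nhdsGT_of_mem (by constructor <;> norm_num)
      filter_upwards [hIoo] with t ht
      have hlt : 0 < t := ht.1
      have hlog : Real.log t < 0 := Real.log_neg ht.1 ht.2
      have hB : 0 < 1 - Real.log t := by linarith
      exact mul_pos hlt (by positivity)
  apply tendsto_atTop_mono' L _ (hg.comp hτ)
  filter_upwards [hmem, self_mem_nhdsWithin] with y hy hy1
  obtain ⟨ht, hle, heq⟩ := key y hy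
  set t := 1 - α y with htdef
  have hsy : Real.sqrt y < 1 := by
    rw [show (1:ℝ) = Real.sqrt 1 by simp]
    exact Real.sqrt_lt_sqrt hy.1 hy1
  have hA : 0 < 1 - Real.sqrt y := by linarith
  have hAle : 1 - Real.sqrt y ≤ 1 - y := by
    nlinarith [Real.sq_sqrt hy.1, Real.sqrt_nonneg y]
  have hAle' : 1 - Real.sqrt y ≤ t * (1 - Real.log t) := heq ▸ hAle
  have hlogt : Real.log t ≤ 0 := Real.log_nonpos (le_of_lt ht) (by
    have := (hα y hy).1.1; simp only [htdef]; linarith)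
  have hB : 0 < 1 - Real.log t := by linarith
  have hsq : (1 - Real.sqrt y)^2 ≤ (t * (1 - Real.log t))^2 :=
    pow_le_pow_left₀ (le_of_lt hA) hAle' 2
  have heq2 : (t * (1 - Real.log t)^2)⁻¹ = t / (t * (1 - Real.log t))^2 := by
    field_simp
  simp only [Function.comp_apply]
  rw [heq2]
  gcongr
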